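/- Let 𝒫_k = 2·3·5⋯p_k denote the k-th primorial (the product of the first k primes). Then for every integer d with 2 ≤ d < 𝒫_k, one has 𝔖(d) < 𝔖(𝒫_k). -/

import Mathlib

open Filter Real

/-- The `n`-th prime, 1-indexed: `nthPrime 1 = 2`, `nthPrime 2 = 3`, ... -/
noncomputable def nthPrime (n : ℕ) : ℕ := Nat.nth Nat.Prime (n - 1)

/-- `N x d` is the number of indices `n ≥ 2` with `pₙ ≤ x` and `pₙ - pₙ₋₁ = d`. -/
noncomputable def N (x : ℝ) (d : ℕ) : ℕ :=
  Set.ncard {n : ℕ | 2 ≤ n ∧ (nthPrime n : ℝ) ≤ x ∧ nthPrime n - nthPrime (n - 1) = d}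

/-- `N* x`, the maximal number of occurrences of any gap among consecutive primes up to `x`. -/
noncomputable def Nstar (x : ℝ) : ℕ := sSup (Set.range fun d => N x d)

/-- A positive integer `d` is a jumping champion for `x` if `N x d` attains `max_d N x d`. -/
def JumpingChampion (x : ℝ) (d : ℕ) : Prop := 0 < d ∧ ∀ e : ℕ, N x e ≤ N x d

/-- `pi2 x d` counts primes `q ≤ x` such that `q - d` is also prime. -/
noncomputable def pi2 (x : ℝ) (d : ℕ) : ℕ :=
  Set.ncard {q : ℕ | q.Prime ∧ (q : ℝ) ≤ x ∧ (q - d).Prime}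

/-- `pi3 x d d'` counts primes `q ≤ x` such that `q - d` and `q - d'` are both prime. -/
noncomputable def pi3 (x : ℝ) (d d' : ℕ) : ℕ :=
  Set.ncard {q : ℕ | q.Prime ∧ (q : ℝ) ≤ x ∧ (q - d).Prime ∧ (q - d').Prime}

/-- The twin prime constant `C₂ = ∏_{p > 2} (1 - 1/(p-1)²)`. -/
noncomputable def C2 : ℝ := ∏' q : {q : ℕ // q.Prime ∧ 2 < q}, (1 - 1 / ((q : ℕ) - 1 : ℝ) ^ 2)

/-- The singular series `𝔖(d)`. -/
noncomputable def singularSeries (d : ℕ) : ℝ :=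
  if Even d then
    2 * C2 * ∏ q ∈ d.primeFactors.filter (fun q => 2 < q), ((q : ℝ) - 1) / ((q : ℝ) - 2)
  else 0

/-- `nu d' d q` is the number of distinct residue classes mod `q` occupied by `{0, d', d}`. -/
def nu (d' d : ℕ) (q : ℕ) : ℕ :=
  ({(0 : ZMod q), (d' : ZMod q), (d : ZMod q)} : Finset (ZMod q)).card

/-- The singular series of the triple `{0, d', d}`. -/
noncomputable def tripleSingularSeries (d' d : ℕ) : ℝ :=
  ∏' q : Nat.Primes, ((1 - 1 / ((q : ℕ) : ℝ)) ^ 3)⁻¹ * (1 - (nu d' d q : ℝ) / ((q : ℕ) : ℝ))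

/-- The `k`-th primorial, the product of the first `k` primes. -/
noncomputable def primorialN (k : ℕ) : ℕ := ∏ i ∈ Finset.range k, Nat.nth Nat.Prime i

/-- The index `n` of the largest primorial `𝒫ₙ ≤ y`. -/
noncomputable def primorialFloorIndex (y : ℝ) : ℕ := sSup {n : ℕ | (primorialN n : ℝ) ≤ y}

/-- Chebyshev's theta function `ϑ(t) = ∑_{p ≤ t} log p`. -/
noncomputable def theta (t : ℝ) : ℝ :=
  ∑ q ∈ (Finset.range (⌊t⌋₊ + 1)).filter Nat.Prime, Real.log q

/-! ### Auxiliary machinery -/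

namespace SSAux

open Finset

/-- The factor of the singular series. -/
noncomputable def ff (q : ℕ) : ℝ := ((q : ℝ) - 1) / ((q : ℝ) - 2)

lemma ff_pos {q : ℕ} (hq : 3 ≤ q) : 0 < ff q := by
  have hq' : (3 : ℝ) ≤ (q : ℝ) := by exact_mod_cast hq
  exact div_pos (by linarith) (by linarith)

lemma one_lt_ff {q : ℕ} (hq : 3 ≤ q) : 1 < ff q := by
  have hq' : (3 : ℝ) ≤ (q : ℝ) := by exact_mod_cast hq
  rw [ff, lt_div_iff₀ (by linarith)]
  linarith

lemma ff_anti {a b : ℕ} (ha : 3 ≤ a) (hab : a ≤ b) : ff b ≤ ff a := by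
  have ha' : (3 : ℝ) ≤ (a : ℝ) := by exact_mod_cast ha
  have hab' : (a : ℝ) ≤ (b : ℝ) := by exact_mod_cast hab
  rw [ff, ff, div_le_div_iff₀ (by linarith) (by linarith)]
  nlinarith

lemma three_le_nth {i : ℕ} (hi : 1 ≤ i) : 3 ≤ Nat.nth Nat.Prime i := by
  have := Nat.nth_monotone Nat.infinite_setOf_prime hi
  rwa [Nat.nth_prime_one_eq_three] at this

lemma nth_card_le_max' (T : Finset ℕ) (hT : ∀ q ∈ T, q.Prime ∧ 2 < q) (hne : T.Nonempty) :
    Nat.nth Nat.Prime T.card ≤ T.max' hne := by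
  have h2T : 2 ∉ T := fun h => by have := (hT 2 h).2; omega
  have hsub : insert 2 T ⊆ (Finset.range (T.max' hne + 1)).filter (fun x => Nat.Prime x) := by
    intro q hq
    rcases Finset.mem_insert.1 hq with rfl | hq
    · refine Finset.mem_filter.2 ⟨Finset.mem_range.2 ?_, Nat.prime_two⟩
      have := (hT _ (T.max'_mem hne)).2; omega
    · exact Finset.mem_filter.2 ⟨Finset.mem_range.2 (Nat.lt_succ_of_le (T.le_max' q hq)),
        (hT q hq).1⟩
  have hcard : T.card < Nat.count Nat.Prime (T.max' hne + 1) := by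
    rw [Nat.count_eq_card_filter_range]
    have := Finset.card_le_card hsub
    rw [Finset.card_insert_of_notMem h2T] at this
    omega
  have := Nat.nth_lt_of_lt_count hcard
  omega

lemma prod_nth_le_prod (n : ℕ) : ∀ T : Finset ℕ, T.card = n → (∀ q ∈ T, q.Prime ∧ 2 < q) →
    (∏ i ∈ Finset.Ico 1 (n + 1), Nat.nth Nat.Prime i) ≤ ∏ q ∈ T, q := by
  induction n with
  | zero =>
      intro T hc _
      have : T = ∅ := Finset.card_eq_zero.1 hc
      simp [this]
  | succ n ih =>
      intro T hc hT
      have hne : T.Nonempty := Finset.card_pos.1 (by omega)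
      set M := T.max' hne with hM
      have hMT : M ∈ T := T.max'_mem hne
      have h1 : Nat.nth Nat.Prime (n + 1) ≤ M := by
        have := nth_card_le_max' T hT hne; rwa [hc] at this
      have hc' : (T.erase M).card = n := by rw [Finset.card_erase_of_mem hMT, hc]; omega
      have ih' := ih (T.erase M) hc' (fun q hq => hT q (Finset.mem_of_mem_erase hq))
      rw [Finset.prod_Ico_succ_top (by omega : 1 ≤ n + 1), ← Finset.mul_prod_erase T _ hMT,
        mul_comm M]
      exact Nat.mul_le_mul ih' h1

lemma prod_ff_le_prod_nth (n : ℕ) : ∀ T : Finset ℕ, T.card = n → (∀ q ∈ T, q.Prime ∧ 2 < q) →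
    (∏ q ∈ T, ff q) ≤ ∏ i ∈ Finset.Ico 1 (n + 1), ff (Nat.nth Nat.Prime i) := by
  induction n with
  | zero =>
      intro T hc _
      have : T = ∅ := Finset.card_eq_zero.1 hc
      simp [this]
  | succ n ih =>
      intro T hc hT
      have hne : T.Nonempty := Finset.card_pos.1 (by omega)
      set M := T.max' hne with hM
      have hMT : M ∈ T := T.max'_mem hne
      have h1 : Nat.nth Nat.Prime (n + 1) ≤ M := by
        have := nth_card_le_max' T hT hne; rwa [hc] at this
      have h3 : 3 ≤ Nat.nth Nat.Prime (n + 1) := three_le_nth (by omega)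
      have hc' : (T.erase M).card = n := by rw [Finset.card_erase_of_mem hMT, hc]; omega
      have ih' := ih (T.erase M) hc' (fun q hq => hT q (Finset.mem_of_mem_erase hq))
      rw [Finset.prod_Ico_succ_top (by omega : 1 ≤ n + 1), ← Finset.mul_prod_erase T _ hMT,
        mul_comm (ff M)]
      have hpos : (0 : ℝ) ≤ ∏ i ∈ Finset.Ico 1 (n + 1), ff (Nat.nth Nat.Prime i) :=
        Finset.prod_nonneg fun i hi => (ff_pos (three_le_nth (Finset.mem_Ico.1 hi).1)).le
      exact mul_le_mul ih' (ff_anti h3 h1) (le_of_lt (ff_pos (by have := hT M hMT; omega)))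
        hpos

lemma primorial_primeFactors (k : ℕ) :
    (primorialN k).primeFactors = (Finset.range k).image (Nat.nth Nat.Prime) := by
  have hinj : Function.Injective (Nat.nth Nat.Prime) :=
    Nat.nth_injective Nat.infinite_setOf_prime
  have h1 : primorialN k = ∏ p ∈ (Finset.range k).image (Nat.nth Nat.Prime), p := by
    rw [Finset.prod_image (fun a _ b _ h => hinj h)]; rfl
  rw [h1]
  exact Nat.primeFactors_prod (by
    intro p hp
    rcases Finset.mem_image.1 hp with ⟨i, _, rfl⟩
    exact Nat.prime_nth_prime i)

lemma filter_image_eq (k : ℕ) :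
    ((Finset.range k).image (Nat.nth Nat.Prime)).filter (fun q => 2 < q) =
      (Finset.Ico 1 k).image (Nat.nth Nat.Prime) := by
  ext a
  simp only [Finset.mem_filter, Finset.mem_image, Finset.mem_range, Finset.mem_Ico]
  constructor
  · rintro ⟨⟨i, hik, rfl⟩, h2⟩
    refine ⟨i, ⟨?_, hik⟩, rfl⟩
    by_contra h
    have : i = 0 := by omega
    rw [this, Nat.nth_prime_zero_eq_two] at h2
    omega
  · rintro ⟨i, ⟨hi1, hik⟩, rfl⟩
    exact ⟨⟨i, hik, rfl⟩, by have := three_le_nth hi1; omega⟩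

lemma key_lt (k : ℕ) (T : Finset ℕ) (hT : ∀ q ∈ T, q.Prime ∧ 2 < q)
    (hprod : (∏ q ∈ T, q) < ∏ i ∈ Finset.Ico 1 k, Nat.nth Nat.Prime i) :
    (∏ q ∈ T, ff q) < ∏ i ∈ Finset.Ico 1 k, ff (Nat.nth Nat.Prime i) := by
  have h1 := prod_nth_le_prod T.card T rfl hT
  have htk : T.card + 1 < k := by
    by_contra h
    push_neg at h
    have hsub : Finset.Ico 1 k ⊆ Finset.Ico 1 (T.card + 1) :=
      Finset.Ico_subset_Ico le_rfl h
    have : (∏ i ∈ Finset.Ico 1 k, Nat.nth Nat.Prime i) ≤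
        ∏ i ∈ Finset.Ico 1 (T.card + 1), Nat.nth Nat.Prime i :=
      Finset.prod_le_prod_of_subset_of_one_le' hsub
        (fun i _ _ => (Nat.prime_nth_prime i).one_lt.le)
    omega
  have h2 := prod_ff_le_prod_nth T.card T rfl hT
  have hsplit : (∏ i ∈ Finset.Ico 1 (T.card + 1), ff (Nat.nth Nat.Prime i)) *
      (∏ i ∈ Finset.Ico (T.card + 1) k, ff (Nat.nth Nat.Prime i)) =
      ∏ i ∈ Finset.Ico 1 k, ff (Nat.nth Nat.Prime i) :=
    Finset.prod_Ico_consecutive _ (by omega) (by omega)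
  have hB : (0 : ℝ) < ∏ i ∈ Finset.Ico 1 (T.card + 1), ff (Nat.nth Nat.Prime i) :=
    Finset.prod_pos fun i hi => ff_pos (three_le_nth (Finset.mem_Ico.1 hi).1)
  have hne2 : (Finset.Ico (T.card + 1) k).Nonempty := by rw [Finset.nonempty_Ico]; omega
  have hC : (1 : ℝ) < ∏ i ∈ Finset.Ico (T.card + 1) k, ff (Nat.nth Nat.Prime i) := by
    have := Finset.prod_lt_prod_of_nonempty (f := fun _ : ℕ => (1 : ℝ))
      (g := fun i => ff (Nat.nth Nat.Prime i)) (fun i _ => one_pos)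
      (fun i hi =>
        one_lt_ff (three_le_nth ((by omega : 1 ≤ T.card + 1).trans (Finset.mem_Ico.1 hi).1)))
      hne2
    simpa using this
  calc (∏ q ∈ T, ff q) ≤ ∏ i ∈ Finset.Ico 1 (T.card + 1), ff (Nat.nth Nat.Prime i) := h2
    _ < (∏ i ∈ Finset.Ico 1 (T.card + 1), ff (Nat.nth Nat.Prime i)) *
        (∏ i ∈ Finset.Ico (T.card + 1) k, ff (Nat.nth Nat.Prime i)) := by
          nth_rewrite 1 [← mul_one (∏ i ∈ Finset.Ico 1 (T.card + 1), ff (Nat.nth Nat.Prime i))]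
          exact mul_lt_mul_of_pos_left hC hB
    _ = _ := hsplit

lemma C2_pos : 0 < C2 := by
  set P := fun q : ℕ => q.Prime ∧ 2 < q with hP
  have hq3 : ∀ q : {q : ℕ // q.Prime ∧ 2 < q}, (3 : ℝ) ≤ ((q : ℕ) : ℝ) := by
    intro q
    have : 3 ≤ (q : ℕ) := by have := q.2.2; omega
    exact_mod_cast this
  have hpos : ∀ q : {q : ℕ // q.Prime ∧ 2 < q},
      (0 : ℝ) < 1 - 1 / (((q : ℕ) : ℝ) - 1) ^ 2 := by
    intro q
    have h3 := hq3 q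
    have h4 : (4 : ℝ) ≤ (((q : ℕ) : ℝ) - 1) ^ 2 := by nlinarith
    have : 1 / (((q : ℕ) : ℝ) - 1) ^ 2 ≤ 1 / 4 :=
      one_div_le_one_div_of_le (by norm_num) h4
    linarith
  have habs : ∀ q : {q : ℕ // q.Prime ∧ 2 < q},
      |Real.log (1 - 1 / (((q : ℕ) : ℝ) - 1) ^ 2)| ≤ 6 / ((q : ℕ) : ℝ) ^ 2 := by
    intro q
    set x : ℝ := ((q : ℕ) : ℝ) with hx
    have h3 : (3 : ℝ) ≤ x := hq3 q
    have h4 : (4 : ℝ) ≤ (x - 1) ^ 2 := by nlinarith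
    have hpq := hpos q
    simp only [← hx] at hpq ⊢
    have hlog_nonpos : Real.log (1 - 1 / (x - 1) ^ 2) ≤ 0 :=
      Real.log_nonpos (by linarith) (by
        have : 0 < 1 / (x - 1) ^ 2 := by positivity
        linarith)
    rw [abs_of_nonpos hlog_nonpos, ← Real.log_inv]
    have hle := Real.log_le_sub_one_of_pos (inv_pos.2 hpq)
    have heq : (1 - 1 / (x - 1) ^ 2)⁻¹ - 1 = 1 / ((x - 1) ^ 2 - 1) := by
      have hne1 : ((x - 1) ^ 2 : ℝ) ≠ 0 := by nlinarith
      have hne2 : ((x - 1) ^ 2 - 1 : ℝ) ≠ 0 := by nlinarith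
      field_simp
      rw [sub_sub_cancel, one_div, inv_mul_eq_div, sub_div, div_self hne1, one_div]
    have hfin : 1 / ((x - 1) ^ 2 - 1) ≤ 6 / x ^ 2 := by
      rw [div_le_div_iff₀ (by nlinarith) (by nlinarith)]
      nlinarith
    calc Real.log (1 - 1 / (x - 1) ^ 2)⁻¹ ≤ (1 - 1 / (x - 1) ^ 2)⁻¹ - 1 := hle
      _ = 1 / ((x - 1) ^ 2 - 1) := heq
      _ ≤ 6 / x ^ 2 := hfin
  have hsum6 : Summable (fun q : {q : ℕ // q.Prime ∧ 2 < q} => 6 / ((q : ℕ) : ℝ) ^ 2) := by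
    have h1 : Summable (fun n : ℕ => 6 / (n : ℝ) ^ 2) := by
      have := (Real.summable_one_div_nat_pow.2 (by norm_num : 1 < 2)).mul_left 6
      refine this.congr fun n => ?_
      rw [mul_one_div]
    exact h1.comp_injective Subtype.val_injective
  have hsumlog : Summable (fun q : {q : ℕ // q.Prime ∧ 2 < q} =>
      Real.log (1 - 1 / (((q : ℕ) : ℝ) - 1) ^ 2)) := by
    refine Summable.of_abs (Summable.of_nonneg_of_le (fun q => abs_nonneg _) habs hsum6)
  have h2 := Real.rexp_tsum_eq_tprod
    (f := fun (q : {q : ℕ // q.Prime ∧ 2 < q}) => 1 - 1 / (((q : ℕ) : ℝ) - 1) ^ 2)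
    (fun q => hpos q) hsumlog
  have : C2 = Real.exp (∑' q : {q : ℕ // q.Prime ∧ 2 < q},
      Real.log (1 - 1 / (((q : ℕ) : ℝ) - 1) ^ 2)) := by
    rw [C2, ← h2]
  rw [this]
  exact Real.exp_pos _

end SSAux


/-- The singular series increases most rapidly on primorials: `𝔖(d) < 𝔖(𝒫ₖ)` for
`2 ≤ d < 𝒫ₖ`. -/
theorem singularSeries_lt_of_lt_primorial (k : ℕ) (d : ℕ) (hd2 : 2 ≤ d)
    (hdk : d < primorialN k) :
    singularSeries d < singularSeries (primorialN k) := by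
  classical
  have hk1 : 1 ≤ k := by
    by_contra h
    have hk0 : k = 0 := by omega
    subst hk0
    simp [primorialN] at hdk
    omega
  have hPk : primorialN k = 2 * ∏ i ∈ Finset.Ico 1 k, Nat.nth Nat.Prime i := by
    rw [primorialN, Finset.prod_range_eq_mul_Ico _ (by omega), Nat.nth_prime_zero_eq_two]
  have hPkeven : Even (primorialN k) := even_iff_two_dvd.2 ⟨_, hPk⟩
  have hSprod : singularSeries (primorialN k) =
      2 * C2 * ∏ i ∈ Finset.Ico 1 k, SSAux.ff (Nat.nth Nat.Prime i) := by
    rw [singularSeries, if_pos hPkeven, SSAux.primorial_primeFactors, SSAux.filter_image_eq,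
      Finset.prod_image (fun a _ b _ h => Nat.nth_injective Nat.infinite_setOf_prime h)]
    rfl
  have hposS : 0 < ∏ i ∈ Finset.Ico 1 k, SSAux.ff (Nat.nth Nat.Prime i) :=
    Finset.prod_pos fun i hi => SSAux.ff_pos (SSAux.three_le_nth (Finset.mem_Ico.1 hi).1)
  have h2C2 : (0 : ℝ) < 2 * C2 := by have := SSAux.C2_pos; linarith
  rcases Nat.even_or_odd d with hev | hodd
  · set T := d.primeFactors.filter (fun q => 2 < q) with hTdef
    have hT : ∀ q ∈ T, q.Prime ∧ 2 < q := fun q hq => by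
      have h := Finset.mem_filter.1 hq
      exact ⟨Nat.prime_of_mem_primeFactors h.1, h.2⟩
    have hd0 : d ≠ 0 := by omega
    have h2f : 2 ∈ d.primeFactors := Nat.mem_primeFactors.2 ⟨Nat.prime_two, hev.two_dvd, hd0⟩
    have h2T : 2 ∉ T := fun h => by have := (Finset.mem_filter.1 h).2; omega
    have hdvd : 2 * (∏ q ∈ T, q) ∣ d := by
      have hsub : insert 2 T ⊆ d.primeFactors :=
        Finset.insert_subset h2f (Finset.filter_subset _ _)
      have h := Finset.prod_dvd_prod_of_subset _ _ (fun q => q) hsub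
      rw [Finset.prod_insert h2T] at h
      exact h.trans (Nat.prod_primeFactors_dvd d)
    have hle : 2 * (∏ q ∈ T, q) ≤ d := Nat.le_of_dvd (by omega) hdvd
    have hprodlt : (∏ q ∈ T, q) < ∏ i ∈ Finset.Ico 1 k, Nat.nth Nat.Prime i := by omega
    have hkey := SSAux.key_lt k T hT hprodlt
    rw [singularSeries, if_pos hev, hSprod]
    have hffT : (∏ q ∈ T, ((q : ℝ) - 1) / ((q : ℝ) - 2)) = ∏ q ∈ T, SSAux.ff q := rfl
    rw [← hTdef, hffT]
    exact mul_lt_mul_of_pos_left hkey h2C2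
  · rw [singularSeries, if_neg (by simpa using Nat.not_even_iff_odd.2 hodd), hSprod]
    exact mul_pos h2C2 hposS
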